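/- Let D : [0,∞) → [0,∞) be a continuous non-decreasing function (supply curve) and I₁ > 0 a required number of impressions. If there exists b* ≥ 0 with D(b*) = I₁, then the minimum cost of obtaining I₁ impressions, where bidding with value b yields D(b) impressions at cost D(b)·b − ∫₀ᵇ D(u) du, equals I₁·b* − ∫₀^{b*} D(u) du, achieved by bidding b* for all requests. -/

import Mathlib

open MeasureTheory Topology

/-- Key pointwise inequality: oriented integral of a monotone function is bounded by
the endpoint value times the length. -/
lemma key_int (D : ℝ → ℝ) (hmono : Monotone D) (hcont : Continuous D)
    (bstar b : ℝ) :
    (∫ u in bstar..b, D u) ≤ (b - bstar) * D b := by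
  rcases le_total bstar b with h | h
  · calc (∫ u in bstar..b, D u) ≤ ∫ _ in bstar..b, D b := by
          apply intervalIntegral.integral_mono_on h
            (hcont.intervalIntegrable _ _) (intervalIntegrable_const)
          exact fun u hu => hmono hu.2
       _ = (b - bstar) * D b := by simp [mul_comm]
  · rw [intervalIntegral.integral_symm]
    have : (b - bstar) * D b = -((bstar - b) * D b) := by ring
    rw [this, neg_le_neg_iff]
    calc (bstar - b) * D b = ∫ _ in b..bstar, D b := by simp [mul_comm]
       _ ≤ ∫ u in b..bstar, D u := by
          apply intervalIntegral.integral_mono_on h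
            (intervalIntegrable_const) (hcont.intervalIntegrable _ _)
          exact fun u hu => hmono hu.1

/-- For a continuous non-decreasing nonnegative supply curve `D` and
required impressions `I₁ > 0`, if `D b* = I₁` for some `b* ≥ 0`, then the minimal cost
over all feasible mixed bidding strategies equals `I₁·b* − ∫₀^{b*} D`, achieved by the
pure strategy bidding `b*`. -/
theorem stmt0 (D : ℝ → ℝ) (hmono : Monotone D) (hcont : Continuous D)
    (hnn : ∀ b, 0 ≤ D b) (I₁ : ℝ) (hI : 0 < I₁)
    (bstar : ℝ) (hbstar : 0 ≤ bstar) (hDb : D bstar = I₁) :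
    IsLeast {c : ℝ | ∃ (P : Finset ℝ) (γ : ℝ → ℝ),
        (∀ b ∈ P, 0 ≤ b) ∧ (∀ b ∈ P, 0 ≤ γ b) ∧
        (∑ b ∈ P, γ b) ≤ 1 ∧
        I₁ ≤ ∑ b ∈ P, γ b * D b ∧
        c = ∑ b ∈ P, γ b * (D b * b - ∫ u in (0:ℝ)..b, D u)}
      (I₁ * bstar - ∫ u in (0:ℝ)..bstar, D u) := by
  set K : ℝ := ∫ u in (0:ℝ)..bstar, D u with hK
  have hK0 : 0 ≤ K := intervalIntegral.integral_nonneg hbstar (fun u _ => hnn u)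
  constructor
  · refine ⟨{bstar}, fun _ => 1, ?_, ?_, ?_, ?_, ?_⟩
    · intro b hb; rw [Finset.mem_singleton] at hb; exact hb ▸ hbstar
    · intro b _; norm_num
    · simp
    · simp [hDb]
    · simp [hDb, mul_comm, hK]
  · rintro c ⟨P, γ, hP, hγ, hsum1, hfeas, rfl⟩
    -- pointwise cost lower bound
    have keyb : ∀ b, D b * bstar - K ≤ D b * b - ∫ u in (0:ℝ)..b, D u := by
      intro b
      have hsplit : (∫ u in (0:ℝ)..b, D u) =
          K + ∫ u in bstar..b, D u := by
        rw [hK, intervalIntegral.integral_add_adjacent_intervals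
          (hcont.intervalIntegrable _ _) (hcont.intervalIntegrable _ _)]
      have := key_int D hmono hcont bstar b
      rw [hsplit]; nlinarith
    have h1 : ∑ b ∈ P, (γ b * D b * bstar - γ b * K)
        ≤ ∑ b ∈ P, γ b * (D b * b - ∫ u in (0:ℝ)..b, D u) := by
      apply Finset.sum_le_sum
      intro b hb
      have := mul_le_mul_of_nonneg_left (keyb b) (hγ b hb)
      nlinarith [this]
    have h2 : ∑ b ∈ P, (γ b * D b * bstar - γ b * K)
        = (∑ b ∈ P, γ b * D b) * bstar - (∑ b ∈ P, γ b) * K := by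
      rw [Finset.sum_sub_distrib, ← Finset.sum_mul, ← Finset.sum_mul]
    have h3 : I₁ * bstar - K ≤ (∑ b ∈ P, γ b * D b) * bstar - (∑ b ∈ P, γ b) * K := by
      have := mul_le_mul_of_nonneg_right hfeas hbstar
      have := mul_le_mul_of_nonneg_right hsum1 hK0
      nlinarith
    linarith [h1, h2.symm ▸ h3]
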